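/- arXiv:2205.14859 — 5 statements merged into one kernel-verified Lean document; each statement's English description precedes it below -/
import Mathlib

section
/- Let I be a nonempty finite set (the item corpus), s : I → ℝ a score function, p : I → ℝ a probability mass function with p k > 0 for every k ∈ I, and let (J_n)_{n≥1} be a sequence of independent identically distributed I-valued random variables on a probability space with P(J_n = k) = p k for every k ∈ I. For a fixed item i ∈ I define for each n ≥ 1 the popularity-corrected resampling weight W_n(i) = (exp(s i)/p i) / Σ_{j=1}^n exp(s(J_j))/p(J_j). Then almost surely, n · p(i) · W_n(i) converges to exp(s i) / Σ_{k∈I} exp(s k) as n → ∞. -/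
open MeasureTheory ProbabilityTheory Filter

/-- Asymptotic form of Theorem 3.1: as the batch size `n → ∞`, the probability
`n · p(i) · W_n(i)` of item `i` appearing in the importance-resampled set converges almost
surely to the softmax probability of `i` over the full corpus. -/
theorem stmt_3
    {I : Type*} [Fintype I] [Nonempty I] [MeasurableSpace I] [MeasurableSingletonClass I]
    (s : I → ℝ) (p : I → ℝ) (hp_pos : ∀ k, 0 < p k) (hp_sum : ∑ k, p k = 1)
    {Ω : Type*} [MeasurableSpace Ω] (μ : Measure Ω) [IsProbabilityMeasure μ]
    (J : ℕ → Ω → I) (hmeas : ∀ n, Measurable (J n))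
    (hindep : iIndepFun (m := fun _ => ‹MeasurableSpace I›) J μ)
    (hdist : ∀ n k, μ {ω | J n ω = k} = ENNReal.ofReal (p k))
    (i : I) :
    ∀ᵐ ω ∂μ, Tendsto (fun n : ℕ =>
        (n : ℝ) * p i *
          ((Real.exp (s i) / p i) /
            ∑ j ∈ Finset.range n, Real.exp (s (J j ω)) / p (J j ω)))
      atTop (nhds (Real.exp (s i) / ∑ k, Real.exp (s k))) := by
  set f : I → ℝ := fun k => Real.exp (s k) / p k with hf
  have hfmeas : Measurable f := measurable_of_countable f
  set X : ℕ → Ω → ℝ := fun n ω => f (J n ω) with hX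
  have hmap : ∀ n, Measure.map (J n) μ = Measure.map (J 0) μ := by
    intro n
    rw [Measure.ext_iff_singleton]
    intro a
    rw [Measure.map_apply (hmeas n) (measurableSet_singleton a),
      Measure.map_apply (hmeas 0) (measurableSet_singleton a)]
    show μ {ω | J n ω = a} = μ {ω | J 0 ω = a}
    rw [hdist, hdist]
  have hident : ∀ n, IdentDistrib (X n) (X 0) μ μ := by
    intro n
    exact (IdentDistrib.of_ae_eq (hmeas n).aemeasurable (by rfl) |>.trans
      ⟨(hmeas n).aemeasurable, (hmeas 0).aemeasurable, hmap n⟩).comp hfmeas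
  have hint : Integrable (X 0) μ := by
    have : Integrable f (Measure.map (J 0) μ) := .of_finite
    exact (integrable_map_measure hfmeas.aestronglyMeasurable (hmeas 0).aemeasurable).mp this
  have hpind : Pairwise (Function.onFun (IndepFun · · μ) X) := by
    intro a b hab
    exact (hindep.indepFun hab).comp hfmeas hfmeas
  have hmean : μ[X 0] = ∑ k, Real.exp (s k) := by
    have : μ[X 0] = ∫ x, f x ∂(Measure.map (J 0) μ) := by
      rw [integral_map (hmeas 0).aemeasurable hfmeas.aestronglyMeasurable]
    rw [this, integral_fintype .of_finite]
    refine Finset.sum_congr rfl fun k _ => ?_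
    rw [Measure.real, Measure.map_apply (hmeas 0) (measurableSet_singleton k)]
    show ((μ {ω | J 0 ω = k}).toReal) • f k = _
    rw [hdist, ENNReal.toReal_ofReal (hp_pos k).le, smul_eq_mul, hf]
    rw [mul_div_assoc', mul_comm, mul_div_assoc, div_self (hp_pos k).ne', mul_one]
  have hslln := strong_law_ae X hint hpind hident
  filter_upwards [hslln] with ω hω
  rw [hmean] at hω
  have hE : (0:ℝ) < ∑ k, Real.exp (s k) :=
    Finset.sum_pos (fun k _ => Real.exp_pos _) Finset.univ_nonempty
  have h2 : Tendsto (fun n : ℕ => p i * (Real.exp (s i) / p i) /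
      ((n : ℝ)⁻¹ * ∑ j ∈ Finset.range n, f (J j ω))) atTop
      (nhds (p i * (Real.exp (s i) / p i) / ∑ k, Real.exp (s k))) := by
    refine Tendsto.div tendsto_const_nhds ?_ hE.ne'
    simpa [smul_eq_mul] using hω
  have heq : p i * (Real.exp (s i) / p i) / ∑ k, Real.exp (s k)
      = Real.exp (s i) / ∑ k, Real.exp (s k) := by
    congr 1
    rw [mul_comm, div_mul_cancel₀ _ (hp_pos i).ne']
  rw [heq] at h2
  refine h2.congr' ?_
  filter_upwards [eventually_ge_atTop 1] with n hn
  have hn' : (n:ℝ) ≠ 0 := by positivity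
  rw [div_eq_mul_inv _ ((n:ℝ)⁻¹ * _), mul_inv, inv_inv]
  ring
end

section
/- Let V be a real-valued random variable on a probability space such that V ≥ a almost surely for some constant a > 0, and suppose V, V², and |V − E[V]|³ are integrable. Then E[1/V] ≤ 1/E[V] + Var(V)/(E[V])³ + E[|V − E[V]|³]/a⁴, where Var(V) = E[(V − E[V])²]. -/
open MeasureTheory ProbabilityTheory

lemma key_pointwise (v m a : ℝ) (ha : 0 < a) (hv : a ≤ v) (hm : a ≤ m) :
    1 / v ≤ 1 / m - (v - m) / m ^ 2 + (v - m) ^ 2 / m ^ 3 + |v - m| ^ 3 / a ^ 4 := by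
  have hv0 : 0 < v := ha.trans_le hv
  have hm0 : 0 < m := ha.trans_le hm
  have h1 : 1 / v = 1 / m - (v - m) / m ^ 2 + (v - m) ^ 2 / m ^ 3 - (v - m) ^ 3 / (v * m ^ 3) := by
    field_simp
    ring
  rw [h1]
  have h2 : -((v - m) ^ 3) ≤ |v - m| ^ 3 := by
    rw [← abs_pow]
    exact neg_le_abs _
  have h3 : a ^ 4 ≤ v * m ^ 3 := by
    calc a ^ 4 = a * a ^ 3 := by ring
      _ ≤ v * m ^ 3 := mul_le_mul hv (pow_le_pow_left₀ ha.le hm 3) (by positivity) hv0.le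
  have h4 : -((v - m) ^ 3) / (v * m ^ 3) ≤ |v - m| ^ 3 / a ^ 4 := by
    calc -((v - m) ^ 3) / (v * m ^ 3) ≤ |v - m| ^ 3 / (v * m ^ 3) :=
          div_le_div_of_nonneg_right h2 (by positivity) |>.trans_eq rfl
      _ ≤ |v - m| ^ 3 / a ^ 4 := div_le_div_of_nonneg_left (by positivity) (by positivity) h3
  rw [neg_div] at h4
  linarith [h4]

/-- Toolbox lemma, third inequality: for a random variable `V ≥ a > 0` a.s. with `V`, `V²`
and `|V − E[V]|³` integrable,
`E[1/V] ≤ 1/E[V] + Var(V)/(E[V])³ + E[|V − E[V]|³]/a⁴`. -/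
theorem stmt_9
    {Ω : Type*} [MeasurableSpace Ω] (μ : Measure Ω) [IsProbabilityMeasure μ]
    (V : Ω → ℝ) (a : ℝ) (ha : 0 < a)
    (hVa : ∀ᵐ ω ∂μ, a ≤ V ω)
    (hV : Integrable V μ) (hV2 : Integrable (fun ω => (V ω) ^ 2) μ)
    (hV3 : Integrable (fun ω => |V ω - ∫ ω', V ω' ∂μ| ^ 3) μ) :
    ∫ ω, 1 / V ω ∂μ
      ≤ 1 / (∫ ω, V ω ∂μ) + variance V μ / (∫ ω, V ω ∂μ) ^ 3
          + (∫ ω, |V ω - ∫ ω', V ω' ∂μ| ^ 3 ∂μ) / a ^ 4 := by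
  set m := ∫ ω, V ω ∂μ with hm_def
  have hma : a ≤ m := by
    have := integral_mono_ae (integrable_const a) hV hVa
    simpa using this
  have hm0 : 0 < m := ha.trans_le hma
  -- Memℒp 2
  have hL2 : MemLp V 2 μ := by
    rw [memLp_two_iff_integrable_sq hV.aestronglyMeasurable]
    simpa [sq] using hV2
  -- integrability pieces
  have hsub : Integrable (fun ω => V ω - m) μ := hV.sub (integrable_const m)
  have hsq : Integrable (fun ω => (V ω - m) ^ 2) μ := by
    have := (hL2.sub (memLp_const m)).integrable_sq
    simpa using this
  have hRHS : Integrable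
      (fun ω => 1 / m - (V ω - m) / m ^ 2 + (V ω - m) ^ 2 / m ^ 3 + |V ω - m| ^ 3 / a ^ 4) μ := by
    exact (((integrable_const _).sub (hsub.div_const _)).add (hsq.div_const _)).add
      (hV3.div_const _)
  have hinv : Integrable (fun ω => 1 / V ω) μ := by
    have hmeas : AEStronglyMeasurable (fun ω => 1 / V ω) μ := by
      have h := hV.aemeasurable.inv.aestronglyMeasurable
      simp only [one_div]
      exact h
    refine Integrable.mono' (integrable_const (1 / a)) hmeas ?_
    filter_upwards [hVa] with ω hω
    rw [Real.norm_eq_abs, abs_of_nonneg (one_div_nonneg.mpr (ha.trans_le hω).le)]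
    exact one_div_le_one_div_of_le ha hω
  have hmono : ∫ ω, 1 / V ω ∂μ ≤
      ∫ ω, (1 / m - (V ω - m) / m ^ 2 + (V ω - m) ^ 2 / m ^ 3 + |V ω - m| ^ 3 / a ^ 4) ∂μ := by
    refine integral_mono_ae hinv hRHS ?_
    filter_upwards [hVa] with ω hω
    exact key_pointwise _ _ _ ha hω hma
  have hzero : ∫ ω, (V ω - m) ∂μ = 0 := by
    rw [integral_sub hV (integrable_const m)]
    simp [hm_def]
  have hvar : variance V μ = ∫ ω, (V ω - m) ^ 2 ∂μ := by
    rw [variance_eq_integral hV.aemeasurable]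
  have hA1 : Integrable (fun ω => 1 / m - (V ω - m) / m ^ 2) μ :=
    (integrable_const _).sub (hsub.div_const _)
  have hA : Integrable (fun ω => 1 / m - (V ω - m) / m ^ 2 + (V ω - m) ^ 2 / m ^ 3) μ :=
    hA1.add (hsq.div_const _)
  rw [integral_add hA (hV3.div_const _), integral_add hA1 (hsq.div_const _),
    integral_sub (integrable_const _) (hsub.div_const _)] at hmono
  simp only [integral_const, measure_univ, probReal_univ, ENNReal.toReal_one, smul_eq_mul, one_mul,
    integral_div, hzero, zero_div, sub_zero] at hmono
  rw [hvar]
  exact hmono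
end

section
/- Let B be a nonempty finite set, w : B → ℝ a probability mass function with w k > 0 for every k ∈ B, s : B → ℝ, a > 0, and for each m ≥ 1 let o_1, …, o_m be independent identically distributed B-valued random variables with P(o_j = k) = w k, and define V_m = a + (1/m) Σ_{j=1}^m exp(s(o_j))/w(o_j). Set μ = a + Σ_{k∈B} exp(s k) and c = Σ_{k∈B} exp(2·s k)/w k − (Σ_{k∈B} exp(s k))². Then there exists a function ε : ℕ → ℝ with ε(m) = o(1/m) as m → ∞ such that for every m ≥ 1, E[1/V_m] ≤ 1/μ + c/(m·μ³) + ε(m). -/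
open MeasureTheory ProbabilityTheory Filter Asymptotics

lemma aux_int {Ω : Type*} [MeasurableSpace Ω] (μ : Measure Ω) [IsProbabilityMeasure μ]
    (f : Ω → ℝ) (hf : AEStronglyMeasurable f μ) (C : ℝ) (h : ∀ ω, |f ω| ≤ C) :
    Integrable f μ :=
  (integrable_const C).mono' hf (Filter.Eventually.of_forall (fun ω => by
    simpa [Real.norm_eq_abs] using h ω))

lemma aux_add {Ω : Type*} [MeasurableSpace Ω] {μ : Measure Ω} {f g : Ω → ℝ}
    (hf : Integrable f μ) (hg : Integrable g μ) :
    Integrable (fun ω => f ω + g ω) μ := hf.add hg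

lemma aux_law {B : Type*} [Fintype B] [MeasurableSpace B] [MeasurableSingletonClass B]
    {Ω : Type*} [MeasurableSpace Ω] (μ : Measure Ω) [IsProbabilityMeasure μ]
    (f : Ω → B) (hf : Measurable f) (w : B → ℝ) (hw : ∀ k, 0 ≤ w k)
    (hd : ∀ k, μ {ω | f ω = k} = ENNReal.ofReal (w k)) (φ : B → ℝ) :
    ∫ ω, φ (f ω) ∂μ = ∑ k, w k * φ k := by
  have h1 : ∫ ω, φ (f ω) ∂μ = ∫ b, φ b ∂(Measure.map f μ) :=
    (integral_map hf.aemeasurable (measurable_of_countable φ).aestronglyMeasurable).symm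
  have : IsProbabilityMeasure (Measure.map f μ) := Measure.isProbabilityMeasure_map hf.aemeasurable
  rw [h1, integral_fintype .of_finite]
  refine Finset.sum_congr rfl (fun k _ => ?_)
  rw [measureReal_def, Measure.map_apply hf (measurableSet_singleton k)]
  have : f ⁻¹' {k} = {ω | f ω = k} := by ext ω; simp
  rw [this, hd k, smul_eq_mul, ENNReal.toReal_ofReal (hw k)]

lemma aux_moments {Ω : Type*} [MeasurableSpace Ω] (μ : Measure Ω) [IsProbabilityMeasure μ]
    (Y : ℕ → Ω → ℝ) (hYm : ∀ j, Measurable (Y j))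
    (hYi : iIndepFun Y μ)
    (K : ℝ) (hK : 0 ≤ K) (hbd : ∀ j ω, |Y j ω| ≤ K)
    (c2 c3 c4 : ℝ)
    (h1 : ∀ j, ∫ ω, Y j ω ∂μ = 0)
    (h2 : ∀ j, ∫ ω, (Y j ω)^2 ∂μ = c2)
    (h3 : ∀ j, ∫ ω, (Y j ω)^3 ∂μ = c3)
    (h4 : ∀ j, ∫ ω, (Y j ω)^4 ∂μ = c4) :
    ∀ m : ℕ, (∫ ω, (∑ j ∈ Finset.range m, Y j ω) ∂μ = 0)
      ∧ (∫ ω, (∑ j ∈ Finset.range m, Y j ω)^2 ∂μ = m * c2)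
      ∧ (∫ ω, (∑ j ∈ Finset.range m, Y j ω)^3 ∂μ = m * c3)
      ∧ (∫ ω, (∑ j ∈ Finset.range m, Y j ω)^4 ∂μ
            = m * c4 + 3*m*((m:ℝ)-1)*c2^2) := by
  -- basic facts
  have hSm : ∀ m : ℕ, Measurable (fun ω => ∑ j ∈ Finset.range m, Y j ω) :=
    fun m => Finset.measurable_sum _ (fun j _ => hYm j)
  have hSbd : ∀ (m : ℕ) ω, |∑ j ∈ Finset.range m, Y j ω| ≤ m * K := by
    intro m ω
    calc |∑ j ∈ Finset.range m, Y j ω| ≤ ∑ j ∈ Finset.range m, |Y j ω| :=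
          Finset.abs_sum_le_sum_abs _ _
      _ ≤ ∑ _j ∈ Finset.range m, K := Finset.sum_le_sum (fun j _ => hbd j ω)
      _ = m * K := by simp [mul_comm]
  have intSp : ∀ (m p : ℕ), Integrable (fun ω => (∑ j ∈ Finset.range m, Y j ω)^p) μ := by
    intro m p
    refine aux_int μ _ ((hSm m).pow_const p).aestronglyMeasurable ((m*K)^p) (fun ω => ?_)
    rw [abs_pow]
    exact pow_le_pow_left₀ (abs_nonneg _) (hSbd m ω) p
  have intYp : ∀ (j p : ℕ), Integrable (fun ω => (Y j ω)^p) μ := by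
    intro j p
    refine aux_int μ _ ((hYm j).pow_const p).aestronglyMeasurable (K^p) (fun ω => ?_)
    rw [abs_pow]
    exact pow_le_pow_left₀ (abs_nonneg _) (hbd j ω) p
  have intSYpq : ∀ (m p q : ℕ),
      Integrable (fun ω => (∑ j ∈ Finset.range m, Y j ω)^p * (Y m ω)^q) μ := by
    intro m p q
    refine aux_int μ _ (((hSm m).pow_const p).mul ((hYm m).pow_const q)).aestronglyMeasurable
      ((m*K)^p * K^q) (fun ω => ?_)
    rw [abs_mul, abs_pow, abs_pow]
    exact mul_le_mul (pow_le_pow_left₀ (abs_nonneg _) (hSbd m ω) p)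
      (pow_le_pow_left₀ (abs_nonneg _) (hbd m ω) q) (pow_nonneg (abs_nonneg _) q)
      (pow_nonneg (by positivity) p)
  -- independence of S_m and Y_m, and product integral factorization
  have mulint : ∀ (m p q : ℕ),
      ∫ ω, (∑ j ∈ Finset.range m, Y j ω)^p * (Y m ω)^q ∂μ
        = (∫ ω, (∑ j ∈ Finset.range m, Y j ω)^p ∂μ) * (∫ ω, (Y m ω)^q ∂μ) := by
    intro m p q
    have hSZ : IndepFun (∑ j ∈ Finset.range m, Y j) (Y m) μ :=
      hYi.indepFun_sum_range_succ hYm m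
    have hSZ' : IndepFun (fun ω => ∑ j ∈ Finset.range m, Y j ω) (Y m) μ := by
      have : (∑ j ∈ Finset.range m, Y j) = (fun ω => ∑ j ∈ Finset.range m, Y j ω) := by
        funext ω; simp [Finset.sum_apply]
      rwa [this] at hSZ
    have hpq : IndepFun (fun ω => (∑ j ∈ Finset.range m, Y j ω)^p)
        (fun ω => (Y m ω)^q) μ :=
      hSZ'.comp (measurable_id.pow_const p) (measurable_id.pow_const q)
    exact hpq.integral_fun_mul_eq_mul_integral (intSp m p).aestronglyMeasurable (intYp m q).aestronglyMeasurable
  -- first moment for all m directly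
  have ES1 : ∀ m : ℕ, ∫ ω, (∑ j ∈ Finset.range m, Y j ω) ∂μ = 0 := by
    intro m
    rw [integral_finset_sum _ (fun j _ => by
      simpa using intYp j 1)]
    simp [h1]
  intro m
  induction m with
  | zero => simp
  | succ m ih =>
    obtain ⟨_, ih2, ih3, ih4⟩ := ih
    have hs : ∀ ω, ∑ j ∈ Finset.range (m+1), Y j ω
        = (∑ j ∈ Finset.range m, Y j ω) + Y m ω := by
      intro ω; rw [Finset.sum_range_succ]
    refine ⟨ES1 _, ?_, ?_, ?_⟩
    · -- second moment
      have e : ∀ ω, (∑ j ∈ Finset.range (m+1), Y j ω)^2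
          = (∑ j ∈ Finset.range m, Y j ω)^2
            + (2*((∑ j ∈ Finset.range m, Y j ω)^1 * (Y m ω)^1) + (Y m ω)^2) := by
        intro ω; rw [hs ω]; ring
      rw [integral_congr_ae (Filter.Eventually.of_forall e),
          integral_add (intSp m 2) (aux_add ((intSYpq m 1 1).const_mul 2) (intYp m 2)),
          integral_add ((intSYpq m 1 1).const_mul 2) (intYp m 2),
          integral_const_mul, mulint m 1 1]
      simp only [pow_one] at *
      rw [ES1 m, ih2, h2 m]
      push_cast; ring
    · -- third moment
      have e : ∀ ω, (∑ j ∈ Finset.range (m+1), Y j ω)^3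
          = (∑ j ∈ Finset.range m, Y j ω)^3
            + (3*((∑ j ∈ Finset.range m, Y j ω)^2 * (Y m ω)^1)
              + (3*((∑ j ∈ Finset.range m, Y j ω)^1 * (Y m ω)^2) + (Y m ω)^3)) := by
        intro ω; rw [hs ω]; ring
      rw [integral_congr_ae (Filter.Eventually.of_forall e),
          integral_add (intSp m 3) (aux_add ((intSYpq m 2 1).const_mul 3)
            (aux_add ((intSYpq m 1 2).const_mul 3) (intYp m 3))),
          integral_add ((intSYpq m 2 1).const_mul 3)
            (aux_add ((intSYpq m 1 2).const_mul 3) (intYp m 3)),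
          integral_add ((intSYpq m 1 2).const_mul 3) (intYp m 3),
          integral_const_mul, integral_const_mul, mulint m 2 1, mulint m 1 2]
      simp only [pow_one]
      rw [ES1 m, ih3, h3 m, h1 m]
      push_cast; ring
    · -- fourth moment
      have e : ∀ ω, (∑ j ∈ Finset.range (m+1), Y j ω)^4
          = (∑ j ∈ Finset.range m, Y j ω)^4
            + (4*((∑ j ∈ Finset.range m, Y j ω)^3 * (Y m ω)^1)
              + (6*((∑ j ∈ Finset.range m, Y j ω)^2 * (Y m ω)^2)
                + (4*((∑ j ∈ Finset.range m, Y j ω)^1 * (Y m ω)^3) + (Y m ω)^4))) := by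
        intro ω; rw [hs ω]; ring
      rw [integral_congr_ae (Filter.Eventually.of_forall e),
          integral_add (intSp m 4) (aux_add ((intSYpq m 3 1).const_mul 4)
            (aux_add ((intSYpq m 2 2).const_mul 6)
              (aux_add ((intSYpq m 1 3).const_mul 4) (intYp m 4)))),
          integral_add ((intSYpq m 3 1).const_mul 4)
            (aux_add ((intSYpq m 2 2).const_mul 6)
              (aux_add ((intSYpq m 1 3).const_mul 4) (intYp m 4))),
          integral_add ((intSYpq m 2 2).const_mul 6)
            (aux_add ((intSYpq m 1 3).const_mul 4) (intYp m 4)),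
          integral_add ((intSYpq m 1 3).const_mul 4) (intYp m 4),
          integral_const_mul, integral_const_mul, integral_const_mul,
          mulint m 3 1, mulint m 2 2, mulint m 1 3]
      simp only [pow_one]
      rw [ES1 m, ih2, ih4, h4 m, h2 m, h1 m]
      push_cast; ring


lemma aux_id0 (μ0 u v : ℝ) (hμ0 : μ0 ≠ 0) (hv : v ≠ 0) (hV : v = μ0 + u) :
    1 / v = 1 / μ0 + ((-(1/μ0^2)) * u
      + ((1/μ0^3) * u^2 + ((-(1/μ0^4)) * u^3 + (1/μ0^4) * (u^4 / v)))) := by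
  subst hV
  field_simp
  ring

lemma aux_id (μ0 mm t v : ℝ) (hμ0 : μ0 ≠ 0) (hm : mm ≠ 0) (hv : v ≠ 0)
    (hV : v = μ0 + t / mm) :
    1 / v = 1 / μ0 + ((-(1/(mm*μ0^2))) * t
      + ((1/(mm^2*μ0^3)) * t^2
        + ((-(1/(mm^3*μ0^4))) * t^3
          + (1/(mm^4*μ0^4)) * (t^4 / v)))) := by
  rw [aux_id0 μ0 (t/mm) v hμ0 hv hV]
  have h1 : (t/mm)^2 = t^2/mm^2 := by ring
  have h2 : (t/mm)^3 = t^3/mm^3 := by ring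
  have h3 : (t/mm)^4 = t^4/mm^4 := by ring
  rw [h1, h2, h3]
  field_simp

section main
variable {B : Type*} [Fintype B] [Nonempty B] [MeasurableSpace B] [MeasurableSingletonClass B]
    {Ω : Type*} [MeasurableSpace Ω]

set_option maxHeartbeats 1000000 in
/-- the per-`m` expansion -/
lemma aux_key
    (w : B → ℝ) (hw_pos : ∀ k, 0 < w k) (hw_sum : ∑ k, w k = 1)
    (s : B → ℝ) (a : ℝ) (ha : 0 < a)
    (μ : Measure Ω) [IsProbabilityMeasure μ]
    (o : ℕ → Ω → B) (hmeas : ∀ j, Measurable (o j))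
    (hindep : iIndepFun o μ)
    (hdist : ∀ j k, μ {ω | o j ω = k} = ENNReal.ofReal (w k)) :
    ∃ C : ℝ, ∀ m : ℕ, 1 ≤ m → ∃ r : ℝ,
      (∫ ω, 1 / (a + (1 / (m : ℝ)) *
            ∑ j ∈ Finset.range m, Real.exp (s (o j ω)) / w (o j ω)) ∂μ)
        = 1 / (a + ∑ k, Real.exp (s k))
          + ((∑ k, Real.exp (2 * s k) / w k) - (∑ k, Real.exp (s k)) ^ 2) /
              ((m : ℝ) * (a + ∑ k, Real.exp (s k)) ^ 3) + r
      ∧ |r| ≤ C / (m : ℝ) ^ 2 := by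
  classical
  set T : ℝ := ∑ k, Real.exp (s k) with hT
  set c : ℝ := (∑ k, Real.exp (2 * s k) / w k) - T ^ 2 with hc
  set μ0 : ℝ := a + T with hμ0
  have hTpos : 0 < T := Finset.sum_pos (fun k _ => Real.exp_pos _) Finset.univ_nonempty
  have hμ0pos : 0 < μ0 := by positivity
  set h : B → ℝ := fun k => Real.exp (s k) / w k - T with hh
  set Y : ℕ → Ω → ℝ := fun j ω => h (o j ω) with hY
  have hYmeas : ∀ j, Measurable (Y j) :=
    fun j => (measurable_of_countable h).comp (hmeas j)
  have hYi : iIndepFun Y μ :=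
    hindep.comp (fun _ => h) (fun _ => measurable_of_countable h)
  have law : ∀ (j : ℕ) (φ : B → ℝ), ∫ ω, φ (o j ω) ∂μ = ∑ k, w k * φ k :=
    fun j φ => aux_law μ (o j) (hmeas j) w (fun k => (hw_pos k).le) (hdist j) φ
  set c2 : ℝ := ∑ k, w k * (h k) ^ 2 with hc2
  set c3 : ℝ := ∑ k, w k * (h k) ^ 3 with hc3
  set c4 : ℝ := ∑ k, w k * (h k) ^ 4 with hc4
  have hc2nn : 0 ≤ c2 :=
    Finset.sum_nonneg (fun k _ => mul_nonneg (hw_pos k).le (by positivity))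
  have hc4nn : 0 ≤ c4 :=
    Finset.sum_nonneg (fun k _ => mul_nonneg (hw_pos k).le (by positivity))
  have hY1 : ∀ j, ∫ ω, Y j ω ∂μ = 0 := by
    intro j
    have := law j h
    rw [hY] ; rw [this]
    have hterm : ∀ k ∈ Finset.univ, w k * h k = Real.exp (s k) - T * w k := by
      intro k _
      have hwk : w k ≠ 0 := (hw_pos k).ne'
      rw [hh]; field_simp
    rw [Finset.sum_congr rfl hterm, Finset.sum_sub_distrib, ← Finset.mul_sum, hw_sum, hT]
    ring
  have hY2 : ∀ j, ∫ ω, (Y j ω) ^ 2 ∂μ = c2 := fun j => law j (fun k => (h k) ^ 2)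
  have hY3 : ∀ j, ∫ ω, (Y j ω) ^ 3 ∂μ = c3 := fun j => law j (fun k => (h k) ^ 3)
  have hY4 : ∀ j, ∫ ω, (Y j ω) ^ 4 ∂μ = c4 := fun j => law j (fun k => (h k) ^ 4)
  have hc2c : c2 = c := by
    rw [hc2, hc]
    have hterm : ∀ k ∈ Finset.univ,
        w k * (h k) ^ 2 = Real.exp (2 * s k) / w k - 2 * T * Real.exp (s k) + T ^ 2 * w k := by
      intro k _
      have hwk : w k ≠ 0 := (hw_pos k).ne'
      rw [hh, two_mul, Real.exp_add]; field_simp; ring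
    rw [Finset.sum_congr rfl hterm]
    rw [Finset.sum_add_distrib, Finset.sum_sub_distrib, ← Finset.mul_sum, ← Finset.mul_sum,
      hw_sum, ← hT]
    ring
  set K : ℝ := ∑ k, |h k| with hK
  have hKnn : 0 ≤ K := Finset.sum_nonneg (fun k _ => abs_nonneg _)
  have hbd : ∀ j ω, |Y j ω| ≤ K :=
    fun j ω => Finset.single_le_sum (f := fun k => |h k|) (fun k _ => abs_nonneg _)
      (Finset.mem_univ _)
  obtain ⟨ES⟩ : Nonempty (∀ m : ℕ,
      (∫ ω, (∑ j ∈ Finset.range m, Y j ω) ∂μ = 0)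
      ∧ (∫ ω, (∑ j ∈ Finset.range m, Y j ω)^2 ∂μ = m * c2)
      ∧ (∫ ω, (∑ j ∈ Finset.range m, Y j ω)^3 ∂μ = m * c3)
      ∧ (∫ ω, (∑ j ∈ Finset.range m, Y j ω)^4 ∂μ
            = m * c4 + 3*m*((m:ℝ)-1)*c2^2)) :=
    ⟨aux_moments μ Y hYmeas hYi K hKnn hbd c2 c3 c4 hY1 hY2 hY3 hY4⟩
  refine ⟨|c3| / μ0 ^ 4 + (c4 + 3 * c2 ^ 2) / (a * μ0 ^ 4), ?_⟩
  intro m hm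
  have hmR : (1:ℝ) ≤ (m:ℝ) := by exact_mod_cast hm
  have hmpos : (0:ℝ) < (m:ℝ) := by linarith
  have hmne : (m:ℝ) ≠ 0 := hmpos.ne'
  -- measurability and bounds
  have hSmeas : Measurable (fun ω => ∑ j ∈ Finset.range m, Y j ω) :=
    Finset.measurable_sum _ (fun j _ => hYmeas j)
  have hSbd : ∀ ω, |∑ j ∈ Finset.range m, Y j ω| ≤ m * K := by
    intro ω
    calc |∑ j ∈ Finset.range m, Y j ω| ≤ ∑ j ∈ Finset.range m, |Y j ω| :=
          Finset.abs_sum_le_sum_abs _ _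
      _ ≤ ∑ _j ∈ Finset.range m, K := Finset.sum_le_sum (fun j _ => hbd j ω)
      _ = m * K := by simp [mul_comm]
  have intS : ∀ p : ℕ, Integrable (fun ω => (∑ j ∈ Finset.range m, Y j ω) ^ p) μ := by
    intro p
    refine aux_int μ _ (hSmeas.pow_const p).aestronglyMeasurable (((m:ℝ)*K)^p) (fun ω => ?_)
    rw [abs_pow]
    exact pow_le_pow_left₀ (abs_nonneg _) (hSbd ω) p
  -- the estimator
  set V : Ω → ℝ := fun ω => a + (1 / (m : ℝ)) *
      ∑ j ∈ Finset.range m, Real.exp (s (o j ω)) / w (o j ω) with hV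
  have hVmeas : Measurable V := by
    apply measurable_const.add
    exact (Finset.measurable_sum _ (fun j _ =>
      (measurable_of_countable (fun k => Real.exp (s k) / w k)).comp (hmeas j))).const_mul _
  have hVa : ∀ ω, a ≤ V ω := by
    intro ω
    have : 0 ≤ (1 / (m : ℝ)) * ∑ j ∈ Finset.range m, Real.exp (s (o j ω)) / w (o j ω) := by
      apply mul_nonneg (by positivity)
      exact Finset.sum_nonneg (fun j _ => div_nonneg (Real.exp_pos _).le (hw_pos _).le)
    rw [hV]; linarith
  have hVpos : ∀ ω, 0 < V ω := fun ω => lt_of_lt_of_le ha (hVa ω)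
  have hVS : ∀ ω, V ω = μ0 + (∑ j ∈ Finset.range m, Y j ω) / m := by
    intro ω
    have hterm : ∀ j ∈ Finset.range m,
        Real.exp (s (o j ω)) / w (o j ω) = Y j ω + T := by
      intro j _; simp only [hY, hh]; ring
    have hsum : ∑ j ∈ Finset.range m, Real.exp (s (o j ω)) / w (o j ω)
        = (∑ j ∈ Finset.range m, Y j ω) + m * T := by
      rw [Finset.sum_congr rfl hterm, Finset.sum_add_distrib]
      simp [mul_comm]
    rw [hV]; simp only [hsum, hμ0]; field_simp; ring
  -- pointwise 4th-order expansion of the reciprocal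
  have hId : ∀ ω, 1 / V ω
      = 1 / μ0 + ((-(1/((m:ℝ)*μ0^2))) * (∑ j ∈ Finset.range m, Y j ω)
        + ((1/((m:ℝ)^2*μ0^3)) * (∑ j ∈ Finset.range m, Y j ω)^2
          + ((-(1/((m:ℝ)^3*μ0^4))) * (∑ j ∈ Finset.range m, Y j ω)^3
            + (1/((m:ℝ)^4*μ0^4)) * ((∑ j ∈ Finset.range m, Y j ω)^4 / V ω)))) := by
    intro ω
    exact aux_id μ0 (m:ℝ) _ _ hμ0pos.ne' hmne (hVpos ω).ne' (hVS ω)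
  -- integrability of each piece
  have intQ : Integrable (fun ω => (∑ j ∈ Finset.range m, Y j ω)^4 / V ω) μ := by
    refine aux_int μ _ ((hSmeas.pow_const 4).div hVmeas).aestronglyMeasurable
      (((m:ℝ)*K)^4 / a) (fun ω => ?_)
    rw [abs_div, abs_pow]
    apply div_le_div₀ (by positivity) (pow_le_pow_left₀ (abs_nonneg _) (hSbd ω) 4)
      (by simpa using ha)
    rw [abs_of_pos (hVpos ω)]; exact hVa ω
  -- integrate the identity
  have hInt : ∫ ω, 1 / V ω ∂μ
      = 1 / μ0 + ((-(1/((m:ℝ)*μ0^2))) * (∫ ω, (∑ j ∈ Finset.range m, Y j ω) ∂μ)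
        + ((1/((m:ℝ)^2*μ0^3)) * (∫ ω, (∑ j ∈ Finset.range m, Y j ω)^2 ∂μ)
          + ((-(1/((m:ℝ)^3*μ0^4))) * (∫ ω, (∑ j ∈ Finset.range m, Y j ω)^3 ∂μ)
            + (1/((m:ℝ)^4*μ0^4)) * (∫ ω, (∑ j ∈ Finset.range m, Y j ω)^4 / V ω ∂μ)))) := by
    have intS1 : Integrable (fun ω => ∑ j ∈ Finset.range m, Y j ω) μ := by
      simpa using intS 1
    rw [integral_congr_ae (Filter.Eventually.of_forall hId),
        integral_add (integrable_const _)
          (aux_add (intS1.const_mul _) (aux_add ((intS 2).const_mul _)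
            (aux_add ((intS 3).const_mul _) (intQ.const_mul _)))),
        integral_add (intS1.const_mul _) (aux_add ((intS 2).const_mul _)
            (aux_add ((intS 3).const_mul _) (intQ.const_mul _))),
        integral_add ((intS 2).const_mul _)
            (aux_add ((intS 3).const_mul _) (intQ.const_mul _)),
        integral_add ((intS 3).const_mul _) (intQ.const_mul _),
        integral_const_mul, integral_const_mul, integral_const_mul, integral_const_mul,
        integral_const]
    simp only [measure_univ, ENNReal.toReal_one, probReal_univ, one_smul, smul_eq_mul, one_mul]
  obtain ⟨e1, e2, e3, e4⟩ := ES m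
  -- bound for the remainder integral
  have hQnn : 0 ≤ ∫ ω, (∑ j ∈ Finset.range m, Y j ω)^4 / V ω ∂μ :=
    integral_nonneg (fun ω => div_nonneg (by positivity) (hVpos ω).le)
  have hQle : ∫ ω, (∑ j ∈ Finset.range m, Y j ω)^4 / V ω ∂μ
      ≤ (m * c4 + 3*m*((m:ℝ)-1)*c2^2) / a := by
    rw [← e4]
    have : (∫ ω, (∑ j ∈ Finset.range m, Y j ω)^4 ∂μ) / a
        = ∫ ω, (∑ j ∈ Finset.range m, Y j ω)^4 / a ∂μ := by
      rw [integral_div]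
    rw [this]
    refine integral_mono intQ ((intS 4).div_const a) (fun ω => ?_)
    exact div_le_div_of_nonneg_left (by positivity) ha (hVa ω)
  refine ⟨(-(1/((m:ℝ)^3*μ0^4))) * ((m:ℝ) * c3)
      + (1/((m:ℝ)^4*μ0^4)) * (∫ ω, (∑ j ∈ Finset.range m, Y j ω)^4 / V ω ∂μ), ?_, ?_⟩
  · have hrfl : (∫ ω, 1 / (a + (1 / (m : ℝ)) *
        ∑ j ∈ Finset.range m, Real.exp (s (o j ω)) / w (o j ω)) ∂μ)
          = ∫ ω, 1 / V ω ∂μ := rfl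
    have hsmall : (1/((m:ℝ)^2*μ0^3)) * ((m:ℝ)*c) = c/((m:ℝ)*μ0^3) := by
      field_simp
    rw [hrfl, hInt, e1, e2, e3, hc2c, mul_zero, hsmall]
    ring
  · have hμ0ne : μ0 ≠ 0 := hμ0pos.ne'
    have hp3 : (0:ℝ) < 1/((m:ℝ)^3*μ0^4) :=
      one_div_pos.mpr (mul_pos (pow_pos hmpos 3) (pow_pos hμ0pos 4))
    have hp4 : (0:ℝ) < 1/((m:ℝ)^4*μ0^4) :=
      one_div_pos.mpr (mul_pos (pow_pos hmpos 4) (pow_pos hμ0pos 4))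
    have hb1 : |(-(1/((m:ℝ)^3*μ0^4))) * ((m:ℝ) * c3)| ≤ (|c3| / μ0^4) / (m:ℝ)^2 := by
      rw [abs_mul, abs_neg, abs_mul]
      rw [abs_of_pos hp3, abs_of_pos hmpos, div_div]
      apply le_of_eq
      field_simp
    have hb2 : |(1/((m:ℝ)^4*μ0^4)) * (∫ ω, (∑ j ∈ Finset.range m, Y j ω)^4 / V ω ∂μ)|
        ≤ ((c4 + 3 * c2^2) / (a * μ0^4)) / (m:ℝ)^2 := by
      rw [abs_mul, abs_of_pos hp4, abs_of_nonneg hQnn]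
      have hQle2 : ∫ ω, (∑ j ∈ Finset.range m, Y j ω)^4 / V ω ∂μ
          ≤ ((m:ℝ)^2 * (c4 + 3 * c2^2)) / a := by
        refine hQle.trans ?_
        apply (div_le_div_iff_of_pos_right ha).mpr
        nlinarith [mul_nonneg (mul_nonneg hmpos.le (sub_nonneg.mpr hmR)) hc4nn,
          mul_nonneg hmpos.le (sq_nonneg c2)]
      calc (1/((m:ℝ)^4*μ0^4)) * (∫ ω, (∑ j ∈ Finset.range m, Y j ω)^4 / V ω ∂μ)
          ≤ (1/((m:ℝ)^4*μ0^4)) * (((m:ℝ)^2 * (c4 + 3 * c2^2)) / a) := by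
            exact mul_le_mul_of_nonneg_left hQle2 hp4.le
        _ = ((c4 + 3 * c2^2) / (a * μ0^4)) / (m:ℝ)^2 := by field_simp
    calc |(-(1/((m:ℝ)^3*μ0^4))) * ((m:ℝ) * c3)
          + (1/((m:ℝ)^4*μ0^4)) * (∫ ω, (∑ j ∈ Finset.range m, Y j ω)^4 / V ω ∂μ)|
        ≤ _ + _ := abs_add_le _ _
      _ ≤ (|c3| / μ0^4) / (m:ℝ)^2 + ((c4 + 3 * c2^2) / (a * μ0^4)) / (m:ℝ)^2 :=
          add_le_add hb1 hb2
      _ = (|c3| / μ0 ^ 4 + (c4 + 3 * c2 ^ 2) / (a * μ0 ^ 4)) / (m:ℝ)^2 := by ring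


end main

/-- Lemma A.3 made precise: the expected reciprocal of the importance-weighted
partition-function estimator `V_m` is bounded by `1/μ + c/(m·μ³)` up to a term that is
`o(1/m)`, where `μ = E[V_m]` and `Var(V_m) = c/m`. -/
theorem stmt_11
    {B : Type*} [Fintype B] [Nonempty B] [MeasurableSpace B] [MeasurableSingletonClass B]
    (w : B → ℝ) (hw_pos : ∀ k, 0 < w k) (hw_sum : ∑ k, w k = 1)
    (s : B → ℝ) (a : ℝ) (ha : 0 < a)
    {Ω : Type*} [MeasurableSpace Ω] (μ : Measure Ω) [IsProbabilityMeasure μ]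
    (o : ℕ → Ω → B) (hmeas : ∀ j, Measurable (o j))
    (hindep : iIndepFun o μ)
    (hdist : ∀ j k, μ {ω | o j ω = k} = ENNReal.ofReal (w k)) :
    ∃ ε : ℕ → ℝ,
      (ε =o[atTop] fun m : ℕ => 1 / (m : ℝ)) ∧
      ∀ m : ℕ, 1 ≤ m →
        ∫ ω, 1 / (a + (1 / (m : ℝ)) *
              ∑ j ∈ Finset.range m, Real.exp (s (o j ω)) / w (o j ω)) ∂μ
          ≤ 1 / (a + ∑ k, Real.exp (s k))
            + ((∑ k, Real.exp (2 * s k) / w k) - (∑ k, Real.exp (s k)) ^ 2) /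
                ((m : ℝ) * (a + ∑ k, Real.exp (s k)) ^ 3)
            + ε m := by
  obtain ⟨C, hC⟩ := aux_key w hw_pos hw_sum s a ha μ o hmeas hindep hdist
  set ε : ℕ → ℝ := fun m => if m = 0 then 0 else
      (∫ ω, 1 / (a + (1 / (m : ℝ)) *
          ∑ j ∈ Finset.range m, Real.exp (s (o j ω)) / w (o j ω)) ∂μ)
        - 1 / (a + ∑ k, Real.exp (s k))
        - ((∑ k, Real.exp (2 * s k) / w k) - (∑ k, Real.exp (s k)) ^ 2) /
            ((m : ℝ) * (a + ∑ k, Real.exp (s k)) ^ 3) with hε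
  have hbound : ∀ m : ℕ, 1 ≤ m → ‖ε m‖ ≤ C / (m : ℝ) ^ 2 := by
    intro m hm
    obtain ⟨r, hr, hrle⟩ := hC m hm
    have hne : m ≠ 0 := by omega
    rw [hε]
    simp only [hne, if_false, hr]
    have : 1 / (a + ∑ k, Real.exp (s k))
        + ((∑ k, Real.exp (2 * s k) / w k) - (∑ k, Real.exp (s k)) ^ 2) /
            ((m : ℝ) * (a + ∑ k, Real.exp (s k)) ^ 3) + r
        - 1 / (a + ∑ k, Real.exp (s k))
        - ((∑ k, Real.exp (2 * s k) / w k) - (∑ k, Real.exp (s k)) ^ 2) /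
            ((m : ℝ) * (a + ∑ k, Real.exp (s k)) ^ 3) = r := by ring
    rw [this, Real.norm_eq_abs]
    exact hrle
  refine ⟨ε, ?_, ?_⟩
  · rw [isLittleO_iff]
    intro δ hδ
    filter_upwards [eventually_ge_atTop (max 1 (Nat.ceil (C / δ) + 1))] with m hm
    have hm1 : 1 ≤ m := le_trans (le_max_left _ _) hm
    have hmR : (1:ℝ) ≤ (m:ℝ) := by exact_mod_cast hm1
    have hmpos : (0:ℝ) < (m:ℝ) := by linarith
    have hCδ : C / δ ≤ (m:ℝ) := by
      refine (Nat.le_ceil _).trans ?_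
      have : (Nat.ceil (C / δ) : ℕ) ≤ m := by
        have := le_trans (le_max_right 1 (Nat.ceil (C / δ) + 1)) hm
        omega
      exact_mod_cast this
    have hCm : C ≤ δ * (m:ℝ) := by
      have := mul_le_mul_of_nonneg_left hCδ hδ.le
      rwa [mul_div_cancel₀ _ hδ.ne'] at this
    calc ‖ε m‖ ≤ C / (m:ℝ)^2 := hbound m hm1
      _ ≤ (δ * (m:ℝ)) / (m:ℝ)^2 := by
          exact (div_le_div_iff_of_pos_right (by positivity)).mpr hCm
      _ = δ * (1 / (m:ℝ)) := by
          rw [pow_two]; field_simp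
      _ = δ * ‖1 / (m:ℝ)‖ := by
          rw [Real.norm_eq_abs, abs_of_nonneg (by positivity)]
  · intro m hm
    have hne : m ≠ 0 := by omega
    rw [hε]
    simp only [hne, if_false]
    apply le_of_eq
    ring
end

section
/- Let B be a nonempty finite set, w : B → ℝ a probability mass function with w k > 0 for every k ∈ B, s : B → ℝ, g : B → ℝ, a > 0, and let o_1, …, o_m (m ≥ 1) be independent identically distributed B-valued random variables with P(o_j = k) = w k for every k ∈ B. Then E[ (exp(s(o_m))/(m·w(o_m))) · g(o_m) / (a + (1/m) Σ_{j=1}^m exp(s(o_j))/w(o_j)) ] = (1/m) Σ_{k∈B} exp(s k) · g k · E[ 1 / (a + (1/m) Σ_{j=1}^{m−1} exp(s(o_j))/w(o_j) + exp(s k)/(m·w k)) ]. -/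
open MeasureTheory ProbabilityTheory

/-- The conditioning identity at the core of Lemma A.2: conditioning on the first `m−1`
samples and summing over the values of the independent last sample `o_m` (here `m = n+1`
and `o_m = o (Fin.last n)`) converts the expectation of one term of the self-normalized
importance-sampling ratio into an average over the batch of expectations of reciprocals. -/
theorem stmt_14
    {B : Type*} [Fintype B] [Nonempty B] [MeasurableSpace B] [MeasurableSingletonClass B]
    (w : B → ℝ) (hw_pos : ∀ k, 0 < w k) (hw_sum : ∑ k, w k = 1)
    (s g : B → ℝ) (a : ℝ) (ha : 0 < a)
    {Ω : Type*} [MeasurableSpace Ω] (μ : Measure Ω) [IsProbabilityMeasure μ]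
    (n : ℕ)
    (o : Fin (n + 1) → Ω → B) (hmeas : ∀ j, Measurable (o j))
    (hindep : iIndepFun o μ)
    (hdist : ∀ j k, μ {ω | o j ω = k} = ENNReal.ofReal (w k)) :
    ∫ ω,
        (Real.exp (s (o (Fin.last n) ω)) / (((n : ℝ) + 1) * w (o (Fin.last n) ω)))
            * g (o (Fin.last n) ω) /
          (a + (1 / ((n : ℝ) + 1)) *
            ∑ j : Fin (n + 1), Real.exp (s (o j ω)) / w (o j ω)) ∂μ
      = (1 / ((n : ℝ) + 1)) * ∑ k, Real.exp (s k) * g k *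
          ∫ ω, 1 /
            (a + (1 / ((n : ℝ) + 1)) *
                (∑ j : Fin n, Real.exp (s (o j.castSucc ω)) / w (o j.castSucc ω))
              + Real.exp (s k) / (((n : ℝ) + 1) * w k)) ∂μ := by
  classical
  have hm : (0:ℝ) < (n:ℝ) + 1 := by positivity
  set X : Ω → ℝ := fun ω => ∑ j : Fin n, Real.exp (s (o j.castSucc ω)) / w (o j.castSucc ω)
    with hXdef
  have hXmeas : Measurable X := by
    apply Finset.measurable_sum
    intro j _
    exact Measurable.comp (measurable_of_countable (fun b => Real.exp (s b) / w b)) (hmeas _)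
  have hXnonneg : ∀ ω, 0 ≤ X ω := fun ω =>
    Finset.sum_nonneg fun j _ => div_nonneg (Real.exp_pos _).le (hw_pos _).le
  set D : B → ℝ → ℝ := fun k x =>
    a + (1 / ((n : ℝ) + 1)) * x + Real.exp (s k) / (((n : ℝ) + 1) * w k) with hDdef
  set c : B → ℝ := fun k => Real.exp (s k) / (((n : ℝ) + 1) * w k) * g k with hcdef
  have hDge : ∀ k x, 0 ≤ x → a ≤ D k x := by
    intro k x hx
    have h1 : 0 < Real.exp (s k) / (((n:ℝ)+1) * w k) :=
      div_pos (Real.exp_pos _) (mul_pos hm (hw_pos k))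
    have h2 : 0 ≤ (1/((n:ℝ)+1)) * x := mul_nonneg (by positivity) hx
    simp only [hDdef]
    linarith
  have hDmeas' : ∀ k, Measurable (fun x : ℝ => D k x) := by
    intro k
    simp only [hDdef]
    exact ((measurable_id.const_mul _).const_add a).add_const _
  have hDmeas : ∀ k, Measurable (fun ω => D k (X ω)) := fun k => (hDmeas' k).comp hXmeas
  -- independence of X and the last sample
  have hindepXY : IndepFun X (o (Fin.last n)) μ := by
    have hS : ∀ j : Fin n, j.castSucc ∈ (Finset.univ.erase (Fin.last n)) := fun j =>
      Finset.mem_erase.2 ⟨(Fin.castSucc_lt_last j).ne, Finset.mem_univ _⟩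
    have hdisj : Disjoint (Finset.univ.erase (Fin.last n))
        ({Fin.last n} : Finset (Fin (n+1))) := by
      simp [Finset.disjoint_singleton_right]
    have h := hindep.indepFun_finset (Finset.univ.erase (Fin.last n)) {Fin.last n} hdisj hmeas
    exact h.comp
      (φ := fun v : (∀ i : (Finset.univ.erase (Fin.last n) : Finset (Fin (n+1))), B) =>
        ∑ j : Fin n, Real.exp (s (v ⟨j.castSucc, hS j⟩)) / w (v ⟨j.castSucc, hS j⟩))
      (ψ := fun v : (∀ i : ({Fin.last n} : Finset (Fin (n+1))), B) =>
        v ⟨Fin.last n, Finset.mem_singleton_self _⟩)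
      (Finset.measurable_sum _ fun j _ =>
        Measurable.comp (measurable_of_countable (fun b => Real.exp (s b) / w b))
          (measurable_pi_apply _))
      (measurable_pi_apply _)
  -- pointwise rewriting of the integrand
  have hpt : ∀ ω,
      (Real.exp (s (o (Fin.last n) ω)) / (((n : ℝ) + 1) * w (o (Fin.last n) ω)))
          * g (o (Fin.last n) ω) /
        (a + (1 / ((n : ℝ) + 1)) * ∑ j : Fin (n + 1), Real.exp (s (o j ω)) / w (o j ω))
      = ∑ k, (if o (Fin.last n) ω = k then (1:ℝ) else 0) * (c k / D k (X ω)) := by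
    intro ω
    simp only [ite_mul, one_mul, zero_mul, Finset.sum_ite_eq, Finset.mem_univ, if_true]
    rw [Fin.sum_univ_castSucc]
    simp only [hcdef, hDdef, hXdef]
    congr 1
    have h1 : w (o (Fin.last n) ω) ≠ 0 := (hw_pos _).ne'
    have h2 : ((n:ℝ)+1) ≠ 0 := hm.ne'
    field_simp
    ring
  have hint : ∀ k ∈ Finset.univ, Integrable
      (fun ω => (if o (Fin.last n) ω = k then (1:ℝ) else 0) * (c k / D k (X ω))) μ := by
    intro k _
    refine ⟨Measurable.aestronglyMeasurable ?_,
      HasFiniteIntegral.of_bounded (C := |c k| / a) (ae_of_all _ ?_)⟩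
    · exact (((measurable_of_countable (fun b => if b = k then (1:ℝ) else 0)).comp
        (hmeas _))).mul (measurable_const.div (hDmeas k))
    · intro ω
      have hge : a ≤ D k (X ω) := hDge k (X ω) (hXnonneg ω)
      rw [Real.norm_eq_abs, abs_mul]
      have h1 : |if o (Fin.last n) ω = k then (1:ℝ) else 0| ≤ 1 := by split <;> simp
      have h2 : |c k / D k (X ω)| ≤ |c k| / a := by
        rw [abs_div, abs_of_pos (lt_of_lt_of_le ha hge)]
        gcongr
      calc |if o (Fin.last n) ω = k then (1:ℝ) else 0| * |c k / D k (X ω)|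
          ≤ 1 * (|c k| / a) := by
            exact mul_le_mul h1 h2 (abs_nonneg _) one_pos.le
        _ = |c k| / a := one_mul _
  have hk : ∀ k, (∫ ω, (if o (Fin.last n) ω = k then (1:ℝ) else 0) * (c k / D k (X ω)) ∂μ)
      = w k * (c k * ∫ ω, 1 / D k (X ω) ∂μ) := by
    intro k
    have hind : IndepFun (fun ω => (if o (Fin.last n) ω = k then (1:ℝ) else 0))
        (fun ω => c k / D k (X ω)) μ :=
      hindepXY.symm.comp (φ := fun b : B => if b = k then (1:ℝ) else 0)
        (ψ := fun x : ℝ => c k / D k x)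
        (measurable_of_countable _)
        (measurable_const.div (hDmeas' k))
    rw [hind.integral_fun_mul_eq_mul_integral
      (((measurable_of_countable (fun b => if b = k then (1:ℝ) else 0)).comp
        (hmeas _))).aestronglyMeasurable
      ((measurable_const.div (hDmeas k)).aestronglyMeasurable)]
    have h1 : (∫ ω, (if o (Fin.last n) ω = k then (1:ℝ) else 0) ∂μ) = w k := by
      have heq : (fun ω => (if o (Fin.last n) ω = k then (1:ℝ) else 0))
          = Set.indicator {ω | o (Fin.last n) ω = k} (fun _ => (1:ℝ)) := by
        ext ω; simp [Set.indicator_apply]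
      have hms : MeasurableSet {ω | o (Fin.last n) ω = k} :=
        hmeas _ (measurableSet_singleton k)
      rw [heq, integral_indicator_const _ hms, measureReal_def, hdist, ENNReal.toReal_ofReal (hw_pos k).le,
        smul_eq_mul, mul_one]
    have h2 : (∫ ω, c k / D k (X ω) ∂μ) = c k * ∫ ω, 1 / D k (X ω) ∂μ := by
      simp only [div_eq_mul_inv, one_mul]
      exact integral_const_mul _ _
    rw [h1, h2]
  calc ∫ ω,
        (Real.exp (s (o (Fin.last n) ω)) / (((n : ℝ) + 1) * w (o (Fin.last n) ω)))
            * g (o (Fin.last n) ω) /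
          (a + (1 / ((n : ℝ) + 1)) *
            ∑ j : Fin (n + 1), Real.exp (s (o j ω)) / w (o j ω)) ∂μ
      = ∫ ω, ∑ k, (if o (Fin.last n) ω = k then (1:ℝ) else 0) * (c k / D k (X ω)) ∂μ :=
        integral_congr_ae (ae_of_all _ hpt)
    _ = ∑ k, ∫ ω, (if o (Fin.last n) ω = k then (1:ℝ) else 0) * (c k / D k (X ω)) ∂μ :=
        integral_finset_sum _ hint
    _ = ∑ k, w k * (c k * ∫ ω, 1 / D k (X ω) ∂μ) := Finset.sum_congr rfl fun k _ => hk k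
    _ = (1 / ((n : ℝ) + 1)) * ∑ k, Real.exp (s k) * g k *
          ∫ ω, 1 /
            (a + (1 / ((n : ℝ) + 1)) *
                (∑ j : Fin n, Real.exp (s (o j.castSucc ω)) / w (o j.castSucc ω))
              + Real.exp (s k) / (((n : ℝ) + 1) * w k)) ∂μ := by
        rw [Finset.mul_sum]
        refine Finset.sum_congr rfl fun k _ => ?_
        simp only [hcdef, hDdef, hXdef]
        have hwk : w k ≠ 0 := (hw_pos k).ne'
        field_simp
end

section
/- Let B be a nonempty finite set, w : B → ℝ a probability mass function with w k > 0 for every k ∈ B, s : B → ℝ, g : B → ℝ, a > 0, b ∈ ℝ, and for each m ≥ 1 let o_1, …, o_m be independent identically distributed B-valued random variables with P(o_j = k) = w k. Define U_m = a·b + (1/m) Σ_{j=1}^m (exp(s(o_j))/w(o_j)) · g(o_j) and V_m = a + (1/m) Σ_{j=1}^m exp(s(o_j))/w(o_j). Then lim_{m→∞} E[U_m / V_m] = (a·b + Σ_{k∈B} exp(s k) · g k) / (a + Σ_{k∈B} exp(s k)). -/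
open MeasureTheory ProbabilityTheory Filter

private lemma slln_aux
    {B : Type*} [Fintype B] [Nonempty B] [MeasurableSpace B] [MeasurableSingletonClass B]
    (w : B → ℝ) (hw_pos : ∀ k, 0 < w k)
    {Ω : Type*} [MeasurableSpace Ω] (μ : Measure Ω) [IsProbabilityMeasure μ]
    (o : ℕ → Ω → B) (hmeas : ∀ j, Measurable (o j))
    (hindep : iIndepFun o μ)
    (hdist : ∀ j k, μ {ω | o j ω = k} = ENNReal.ofReal (w k))
    (f : B → ℝ) :
    ∀ᵐ ω ∂μ, Tendsto (fun n : ℕ => (∑ j ∈ Finset.range n, f (o j ω)) / n) atTop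
      (nhds (∑ k, w k * f k)) := by
  have hf : Measurable f := measurable_of_countable f
  have hmap : ∀ j, Measure.map (o j) μ = Measure.map (o 0) μ := by
    intro j
    apply MeasureTheory.Measure.ext_of_singleton
    intro k
    rw [Measure.map_apply (hmeas j) (measurableSet_singleton k),
      Measure.map_apply (hmeas 0) (measurableSet_singleton k)]
    have h1 : o j ⁻¹' {k} = {ω | o j ω = k} := rfl
    have h2 : o 0 ⁻¹' {k} = {ω | o 0 ω = k} := rfl
    rw [h1, h2, hdist j k, hdist 0 k]
  have hident : ∀ j, IdentDistrib (fun ω => f (o j ω)) (fun ω => f (o 0 ω)) μ μ := by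
    intro j
    have : IdentDistrib (o j) (o 0) μ μ :=
      ⟨(hmeas j).aemeasurable, (hmeas 0).aemeasurable, hmap j⟩
    exact this.comp hf
  have hpair : Pairwise (Function.onFun (IndepFun · · μ) fun j ω => f (o j ω)) := by
    intro i j hij
    exact (hindep.indepFun hij).comp hf hf
  have hint : Integrable (fun ω => f (o 0 ω)) μ := by
    have : IsProbabilityMeasure (Measure.map (o 0) μ) :=
      Measure.isProbabilityMeasure_map (hmeas 0).aemeasurable
    have hi : Integrable f (Measure.map (o 0) μ) := Integrable.of_finite
    exact (integrable_map_measure hf.aestronglyMeasurable (hmeas 0).aemeasurable).mp hi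
  have hE : (∫ ω, f (o 0 ω) ∂μ) = ∑ k, w k * f k := by
    rw [← integral_map (hmeas 0).aemeasurable hf.aestronglyMeasurable,
      integral_fintype Integrable.of_finite]
    refine Finset.sum_congr rfl fun k _ => ?_
    rw [measureReal_def, Measure.map_apply (hmeas 0) (measurableSet_singleton k)]
    have h1 : o 0 ⁻¹' {k} = {ω | o 0 ω = k} := rfl
    rw [h1, hdist 0 k, ENNReal.toReal_ofReal (hw_pos k).le, smul_eq_mul]
  have := strong_law_ae_real (fun j ω => f (o j ω)) hint hpair hident
  rw [hE] at this
  exact this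

/-- Asymptotic unbiasedness of the self-normalized sampled-softmax gradient estimator:
`E[U_m / V_m] → E[U] / E[V]` as the number `m` of resampled items grows, where
`U_m = a·b + (1/m) ∑_{j=1}^m (exp(s(o_j))/w(o_j))·g(o_j)` and
`V_m = a + (1/m) ∑_{j=1}^m exp(s(o_j))/w(o_j)`. -/
theorem stmt_17
    {B : Type*} [Fintype B] [Nonempty B] [MeasurableSpace B] [MeasurableSingletonClass B]
    (w : B → ℝ) (hw_pos : ∀ k, 0 < w k) (hw_sum : ∑ k, w k = 1)
    (s g : B → ℝ) (a : ℝ) (ha : 0 < a) (b : ℝ)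
    {Ω : Type*} [MeasurableSpace Ω] (μ : Measure Ω) [IsProbabilityMeasure μ]
    (o : ℕ → Ω → B) (hmeas : ∀ j, Measurable (o j))
    (hindep : iIndepFun o μ)
    (hdist : ∀ j k, μ {ω | o j ω = k} = ENNReal.ofReal (w k)) :
    Tendsto (fun m : ℕ =>
        ∫ ω,
          (a * b + (1 / (m : ℝ)) *
              ∑ j ∈ Finset.range m, (Real.exp (s (o j ω)) / w (o j ω)) * g (o j ω)) /
            (a + (1 / (m : ℝ)) *
              ∑ j ∈ Finset.range m, Real.exp (s (o j ω)) / w (o j ω)) ∂μ)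
      atTop
      (nhds ((a * b + ∑ k, Real.exp (s k) * g k) / (a + ∑ k, Real.exp (s k)))) := by
  set Eu : ℝ := ∑ k, Real.exp (s k) * g k with hEu
  set Ev : ℝ := ∑ k, Real.exp (s k) with hEv
  have hEv_pos : 0 < Ev := Finset.sum_pos (fun k _ => Real.exp_pos _) Finset.univ_nonempty
  have hden_ne : a + Ev ≠ 0 := by positivity
  -- SLLN for the two component sequences
  have hU := slln_aux w hw_pos μ o hmeas hindep hdist
      (fun k => Real.exp (s k) / w k * g k)
  have hV := slln_aux w hw_pos μ o hmeas hindep hdist (fun k => Real.exp (s k) / w k)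
  have hUval : (∑ k, w k * (Real.exp (s k) / w k * g k)) = Eu := by
    refine Finset.sum_congr rfl fun k _ => ?_
    field_simp
    exact mul_div_cancel_left₀ _ (hw_pos k).ne'
  have hVval : (∑ k, w k * (Real.exp (s k) / w k)) = Ev := by
    refine Finset.sum_congr rfl fun k _ => ?_
    field_simp
    exact div_self (hw_pos k).ne'
  rw [hUval] at hU
  rw [hVval] at hV
  -- the uniform bound
  set M : ℝ := |b| + ∑ k, |g k| with hM
  have hbM : |b| ≤ M := le_add_of_nonneg_right (Finset.sum_nonneg fun k _ => abs_nonneg _)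
  have hgM : ∀ k, |g k| ≤ M := fun k =>
    le_add_of_nonneg_of_le (abs_nonneg b) (Finset.single_le_sum (fun k _ => abs_nonneg (g k))
      (Finset.mem_univ k))
  have hM0 : 0 ≤ M := (abs_nonneg b).trans hbM
  -- abbreviations
  set F : ℕ → Ω → ℝ := fun m ω =>
    (a * b + (1 / (m : ℝ)) *
        ∑ j ∈ Finset.range m, (Real.exp (s (o j ω)) / w (o j ω)) * g (o j ω)) /
      (a + (1 / (m : ℝ)) * ∑ j ∈ Finset.range m, Real.exp (s (o j ω)) / w (o j ω)) with hF
  have key : Tendsto (fun m : ℕ => ∫ ω, F m ω ∂μ) atTop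
      (nhds (∫ _ : Ω, ((a * b + Eu) / (a + Ev)) ∂μ)) := by
    apply tendsto_integral_of_dominated_convergence (fun _ => M)
    · intro m
      apply Measurable.aestronglyMeasurable
      apply Measurable.div
      · apply Measurable.add measurable_const
        apply Measurable.const_mul
        exact Finset.measurable_sum _ fun j _ =>
          (measurable_of_countable (fun k => Real.exp (s k) / w k * g k)).comp (hmeas j)
      · apply Measurable.add measurable_const
        apply Measurable.const_mul
        exact Finset.measurable_sum _ fun j _ =>
          (measurable_of_countable (fun k => Real.exp (s k) / w k)).comp (hmeas j)
    · exact integrable_const M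
    · intro m
      filter_upwards with ω
      set T : ℝ := (1 / (m : ℝ)) * ∑ j ∈ Finset.range m, Real.exp (s (o j ω)) / w (o j ω)
        with hT
      have hT0 : 0 ≤ T := by
        apply mul_nonneg (by positivity)
        exact Finset.sum_nonneg fun j _ => div_nonneg (Real.exp_pos _).le (hw_pos _).le
      have hDpos : 0 < a + T := by linarith
      have hnum : |a * b + (1 / (m : ℝ)) *
          ∑ j ∈ Finset.range m, Real.exp (s (o j ω)) / w (o j ω) * g (o j ω)| ≤ M * (a + T) := by
        calc |a * b + (1 / (m : ℝ)) *
            ∑ j ∈ Finset.range m, Real.exp (s (o j ω)) / w (o j ω) * g (o j ω)|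
            ≤ |a * b| + |(1 / (m : ℝ)) *
              ∑ j ∈ Finset.range m, Real.exp (s (o j ω)) / w (o j ω) * g (o j ω)| :=
              abs_add_le _ _
          _ ≤ a * M + (1 / (m : ℝ)) *
              ∑ j ∈ Finset.range m, Real.exp (s (o j ω)) / w (o j ω) * M := by
              gcongr ?_ + ?_
              · rw [abs_mul, abs_of_pos ha]
                exact mul_le_mul_of_nonneg_left hbM ha.le
              · rw [abs_mul]
                rw [abs_of_nonneg (by positivity : (0:ℝ) ≤ 1 / (m : ℝ))]
                apply mul_le_mul_of_nonneg_left _ (by positivity)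
                calc |∑ j ∈ Finset.range m, Real.exp (s (o j ω)) / w (o j ω) * g (o j ω)|
                    ≤ ∑ j ∈ Finset.range m, |Real.exp (s (o j ω)) / w (o j ω) * g (o j ω)| :=
                      Finset.abs_sum_le_sum_abs _ _
                  _ ≤ ∑ j ∈ Finset.range m, Real.exp (s (o j ω)) / w (o j ω) * M := by
                      apply Finset.sum_le_sum
                      intro j _
                      rw [abs_mul, abs_of_nonneg
                        (div_nonneg (Real.exp_pos _).le (hw_pos _).le)]
                      exact mul_le_mul_of_nonneg_left (hgM _)
                        (div_nonneg (Real.exp_pos _).le (hw_pos _).le)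
          _ = M * (a + T) := by
              rw [hT, ← Finset.sum_mul, ← mul_assoc]
              ring
      have : ‖F m ω‖ = |a * b + (1 / (m : ℝ)) *
          ∑ j ∈ Finset.range m, Real.exp (s (o j ω)) / w (o j ω) * g (o j ω)| / (a + T) := by
        rw [hF]
        simp only [Real.norm_eq_abs, abs_div, abs_of_pos hDpos]
        exact congrArg _ (abs_of_pos hDpos)
      rw [this, div_le_iff₀ hDpos]
      exact hnum
    · filter_upwards [hU, hV] with ω hUω hVω
      have hU' : Tendsto (fun m : ℕ => (1 / (m : ℝ)) *
          ∑ j ∈ Finset.range m, Real.exp (s (o j ω)) / w (o j ω) * g (o j ω)) atTop (nhds Eu) := by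
        simpa [div_eq_inv_mul, one_div] using hUω
      have hV' : Tendsto (fun m : ℕ => (1 / (m : ℝ)) *
          ∑ j ∈ Finset.range m, Real.exp (s (o j ω)) / w (o j ω)) atTop (nhds Ev) := by
        simpa [div_eq_inv_mul, one_div] using hVω
      exact ((tendsto_const_nhds.add hU').div (tendsto_const_nhds.add hV') hden_ne)
  rwa [integral_const, probReal_univ, one_smul] at key
end
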